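/- If a Banach space X contains no isomorphic copy of ℓ₁ and has the coarse p-DP* property, then the closed unit ball B_X is a coarse p-limited set. -/

import Mathlib

open Filter Topology Metric

noncomputable section

/-- The sequence space `ℓ_p` over `ℝ`. -/
abbrev lpS (p : ENNReal) : Type := lp (fun _ : ℕ => ℝ) p

variable {W X Y Z : Type*}

/-- A set `A ⊆ X` is coarse `p`-limited if every bounded operator `T : X → ℓ_p`
maps `A` to a relatively compact subset of `ℓ_p`. -/
def CoarsePLimited (p : ENNReal) [Fact (1 ≤ p)]
    [NormedAddCommGroup X] [NormedSpace ℝ X] (A : Set X) : Prop :=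
  ∀ T : X →L[ℝ] lpS p, IsCompact (closure (T '' A))

/-- A sequence is weakly null if every continuous functional sends it to a null sequence. -/
def WeaklyNull [NormedAddCommGroup X] [NormedSpace ℝ X] (x : ℕ → X) : Prop :=
  ∀ f : X →L[ℝ] ℝ, Tendsto (fun n => f (x n)) atTop (𝓝 0)

/-- A sequence is weakly Cauchy if every continuous functional sends it to a Cauchy sequence. -/
def WeaklyCauchy [NormedAddCommGroup X] [NormedSpace ℝ X] (x : ℕ → X) : Prop :=
  ∀ f : X →L[ℝ] ℝ, CauchySeq (fun n => f (x n))

/-- A set is conditionally weakly compact if every sequence in it has a weakly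
Cauchy subsequence. -/
def CondWeaklyCompact [NormedAddCommGroup X] [NormedSpace ℝ X] (A : Set X) : Prop :=
  ∀ x : ℕ → X, (∀ n, x n ∈ A) → ∃ φ : ℕ → ℕ, StrictMono φ ∧ WeaklyCauchy (x ∘ φ)

/-- A set is relatively weakly compact if its closure in the weak topology is compact. -/
def RelWeaklyCompact [NormedAddCommGroup X] [NormedSpace ℝ X] (A : Set X) : Prop :=
  IsCompact (closure ((toWeakSpaceCLM ℝ X) '' A))

/-- A Banach space has the coarse `p`-DP* property if every relatively weakly compact
subset is coarse `p`-limited. -/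
def CoarsePDPstar (p : ENNReal) [Fact (1 ≤ p)] (X : Type*)
    [NormedAddCommGroup X] [NormedSpace ℝ X] : Prop :=
  ∀ A : Set X, RelWeaklyCompact A → CoarsePLimited p A

/-- A Banach space has the coarse `p`-Gelfand-Phillips property if every coarse
`p`-limited subset is relatively compact. -/
def CoarsePGP (p : ENNReal) [Fact (1 ≤ p)] (X : Type*)
    [NormedAddCommGroup X] [NormedSpace ℝ X] : Prop :=
  ∀ A : Set X, CoarsePLimited p A → IsCompact (closure A)

/-- A set `A` is limited if every weak*-null sequence of functionals converges to `0`
uniformly on `A`. -/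
def LimitedSet [NormedAddCommGroup X] [NormedSpace ℝ X] (A : Set X) : Prop :=
  ∀ f : ℕ → (X →L[ℝ] ℝ), (∀ x : X, Tendsto (fun n => f n x) atTop (𝓝 0)) →
    TendstoUniformlyOn (fun n x => f n x) 0 atTop A

/-- A set `A` is `p`-limited if for every weak* `p`-summable sequence `(f n)` of
functionals there is `a ∈ ℓ_p` with `|f n x| ≤ a n` for all `x ∈ A` and all `n`. -/
def PLimitedSet (p : ENNReal) [NormedAddCommGroup X] [NormedSpace ℝ X] (A : Set X) : Prop :=
  ∀ f : ℕ → (X →L[ℝ] ℝ), (∀ x : X, Memℓp (fun n => f n x) p) →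
    ∃ a : ℕ → ℝ, Memℓp a p ∧ ∀ x ∈ A, ∀ n, |f n x| ≤ a n

/-- A sequence of vectors has norm-null if its norms tend to zero. -/
def NormNull [NormedAddCommGroup X] (x : ℕ → X) : Prop :=
  Tendsto (fun n => ‖x n‖) atTop (𝓝 0)

/-- The Schur property: weakly null sequences are norm null. -/
def SchurProp (X : Type*) [NormedAddCommGroup X] [NormedSpace ℝ X] : Prop :=
  ∀ x : ℕ → X, WeaklyNull x → NormNull x

/-- A coarse `p`-limited operator: the image of the unit ball is coarse `p`-limited. -/
def CoarsePLimOp (p : ENNReal) [Fact (1 ≤ p)] [NormedAddCommGroup X] [NormedSpace ℝ X]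
    [NormedAddCommGroup Y] [NormedSpace ℝ Y] (T : X →L[ℝ] Y) : Prop :=
  CoarsePLimited p (T '' closedBall (0 : X) 1)

/-- A weakly compact operator: the image of the unit ball is relatively weakly compact. -/
def WeaklyCompactOp [NormedAddCommGroup X] [NormedSpace ℝ X]
    [NormedAddCommGroup Y] [NormedSpace ℝ Y] (T : X →L[ℝ] Y) : Prop :=
  RelWeaklyCompact (T '' closedBall (0 : X) 1)

/-- A compact operator: the image of the unit ball is relatively compact. -/
def CompactOp [NormedAddCommGroup X] [NormedSpace ℝ X]
    [NormedAddCommGroup Y] [NormedSpace ℝ Y] (T : X →L[ℝ] Y) : Prop :=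
  IsCompact (closure (T '' closedBall (0 : X) 1))

/-- `X` contains an isomorphic copy of `ℓ₁`. -/
def ContainsL1 (X : Type*) [NormedAddCommGroup X] [NormedSpace ℝ X] : Prop :=
  ∃ T : lpS 1 →L[ℝ] X, ∃ c : ℝ, 0 < c ∧ ∀ v : lpS 1, c * ‖v‖ ≤ ‖T v‖

namespace RosenthalAux

variable {α : Type*}

/-- `s` is a bilateral point of `D` along `L`. -/
def RBilat (A B : ℕ → Set α) (D : Set α) (L : Set ℕ) : Prop :=
  ∃ s ∈ D, {n ∈ L | s ∈ A n}.Infinite ∧ {n ∈ L | s ∈ B n}.Infinite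

/-- Every infinite subset of `M` admits a bilateral point in `D`. -/
def Rich (A B : ℕ → Set α) (D : Set α) (M : Set ℕ) : Prop :=
  ∀ L ⊆ M, L.Infinite → RBilat A B D L

theorem Rich.mono {A B : ℕ → Set α} {D : Set α} {M M' : Set ℕ} (h : Rich A B D M)
    (hs : M' ⊆ M) : Rich A B D M' :=
  fun L hL hLi => h L (hL.trans hs) hLi

/-- The key extension lemma: if finitely many sets are rich for `M`, one can find an index
`n ∈ M` and an infinite `M' ⊆ M` beyond `n` such that all the intersections with `A n` and
`B n` remain rich. -/
theorem rich_extend {ι : Type*} [Finite ι] (A B : ℕ → Set α) (D : ι → Set α) (M : Set ℕ)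
    (hM : M.Infinite) (h : ∀ i, Rich A B (D i) M) :
    ∃ n ∈ M, ∃ M', M' ⊆ M ∧ M'.Infinite ∧ (∀ m ∈ M', n < m) ∧
      ∀ i, Rich A B (D i ∩ A n) M' ∧ Rich A B (D i ∩ B n) M' := by
  by_contra hcon
  push_neg at hcon
  -- one-step failure extraction
  have step : ∀ L : Set ℕ, L ⊆ M → L.Infinite →
      ∃ (L' : Set ℕ) (i : ι) (b : Bool), L' ⊆ M ∧ L'.Infinite ∧ L' ⊆ L ∧
        (∀ m ∈ L', sInf L < m) ∧
        ¬ RBilat A B (D i ∩ (bif b then A (sInf L) else B (sInf L))) L' := by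
    intro L hLM hLi
    have hne : L.Nonempty := hLi.nonempty
    have hnL : sInf L ∈ L := Nat.sInf_mem hne
    set n := sInf L with hn
    have hM' : {m ∈ L | n < m}.Infinite := by
      have : L \ {n} ⊆ {m ∈ L | n < m} := by
        intro m hm
        refine ⟨hm.1, lt_of_le_of_ne (Nat.sInf_le hm.1) ?_⟩
        intro hne'; exact hm.2 (by simp [hne'.symm])
      exact ((hLi.diff (Set.finite_singleton n)).mono this)
    have hsub : {m ∈ L | n < m} ⊆ M := fun m hm => hLM hm.1
    have hlt : ∀ m ∈ {m ∈ L | n < m}, n < m := fun m hm => hm.2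
    obtain ⟨i, hi⟩ := hcon n (hLM hnL) {m ∈ L | n < m} hsub hM' hlt
    rcases Classical.em (Rich A B (D i ∩ A n) {m ∈ L | n < m}) with hA | hA
    · -- then the B part must fail
      have hB : ¬ Rich A B (D i ∩ B n) {m ∈ L | n < m} := hi hA
      rw [Rich] at hB
      push_neg at hB
      obtain ⟨L', hL'sub, hL'inf, hno⟩ := hB
      exact ⟨L', i, false, (hL'sub.trans hsub), hL'inf, fun m hm => (hL'sub hm).1,
        fun m hm => (hL'sub hm).2, by simpa using hno⟩
    · rw [Rich] at hA
      push_neg at hA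
      obtain ⟨L', hL'sub, hL'inf, hno⟩ := hA
      exact ⟨L', i, true, (hL'sub.trans hsub), hL'inf, fun m hm => (hL'sub hm).1,
        fun m hm => (hL'sub hm).2, by simpa using hno⟩
  choose L' idx bb hsubM hinf hsubL hbig hno using step
  -- build the recursive sequence of sets
  let seq : ℕ → {L : Set ℕ // L ⊆ M ∧ L.Infinite} := fun k =>
    Nat.rec ⟨M, subset_rfl, hM⟩
      (fun _ p => ⟨L' p.1 p.2.1 p.2.2, hsubM _ _ _, hinf _ _ _⟩) k
  have hseq_succ : ∀ k, (seq (k + 1) : Set ℕ) = L' (seq k).1 (seq k).2.1 (seq k).2.2 := by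
    intro k; rfl
  set nk : ℕ → ℕ := fun k => sInf (seq k).1 with hnk
  have hmem : ∀ k, nk k ∈ (seq k).1 := fun k => Nat.sInf_mem (seq k).2.2.nonempty
  have hbig' : ∀ k, ∀ m ∈ (seq (k+1)).1, nk k < m := by
    intro k m hm
    rw [hseq_succ k] at hm
    exact hbig _ _ _ m hm
  have hnested : ∀ k j, k ≤ j → (seq j).1 ⊆ (seq k).1 := by
    intro k j hkj
    induction j with
    | zero => simp_all
    | succ j ih =>
      rcases Nat.lt_or_ge k (j+1) with h | h
      · have h1 : (seq (j+1)).1 ⊆ (seq j).1 := by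
          rw [hseq_succ j]; exact hsubL _ _ _
        exact h1.trans (ih (Nat.lt_succ_iff.mp h))
      · have : k = j + 1 := le_antisymm hkj h
        subst this; exact subset_rfl
  have hnkmono : StrictMono nk := by
    apply strictMono_nat_of_lt_succ
    intro k
    exact hbig' k _ (hmem (k+1))
  -- data at each step
  set ik : ℕ → ι := fun k => idx (seq k).1 (seq k).2.1 (seq k).2.2 with hik
  set bk : ℕ → Bool := fun k => bb (seq k).1 (seq k).2.1 (seq k).2.2 with hbk
  have hnok : ∀ k, ¬ RBilat A B (D (ik k) ∩ (bif bk k then A (nk k) else B (nk k)))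
      (seq (k+1)).1 := by
    intro k
    have := hno (seq k).1 (seq k).2.1 (seq k).2.2
    rw [← hseq_succ k] at this
    exact this
  -- pigeonhole
  obtain ⟨⟨i, b⟩, hfib⟩ := Finite.exists_infinite_fiber (fun k => (ik k, bk k) : ℕ → ι × Bool)
  have hK : {k | ik k = i ∧ bk k = b}.Infinite := by
    have h0 : ((fun k => (ik k, bk k)) ⁻¹' {(i, b)}).Infinite := Set.infinite_coe_iff.mp hfib
    refine h0.mono ?_
    intro k hk
    simp only [Set.mem_preimage, Set.mem_singleton_iff, Prod.mk.injEq] at hk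
    exact hk
  set K := {k | ik k = i ∧ bk k = b} with hKdef
  set Lstar := nk '' K with hLstar
  have hLstarM : Lstar ⊆ M := by
    rintro m ⟨k, _, rfl⟩
    exact (seq k).2.1 (hmem k)
  have hLstarInf : Lstar.Infinite := hK.image (Set.injOn_of_injective hnkmono.injective)
  obtain ⟨s, hsD, hPinf, hQinf⟩ := h i Lstar hLstarM hLstarInf
  -- tails of Lstar are inside each (seq (k+1)).1
  have htail : ∀ k, ∀ j ∈ K, k < j → nk j ∈ (seq (k+1)).1 := by
    intro k j _ hkj
    exact hnested (k+1) j hkj (hmem j)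
  have key : ∀ k ∈ K, s ∈ (bif b then A (nk k) else B (nk k)) → False := by
    intro k hk hs
    apply hnok k
    refine ⟨s, ⟨by rw [hk.1]; exact hsD, by rw [hk.2]; exact hs⟩, ?_, ?_⟩
    · -- A-side infinite along (seq (k+1)).1
      have h1 : ({n ∈ Lstar | s ∈ A n} \ (nk '' Set.Iic k)).Infinite :=
        hPinf.diff ((Set.finite_Iic k).image nk)
      refine h1.mono ?_
      rintro m ⟨⟨⟨j, hjK, rfl⟩, hmA⟩, hnot⟩
      have hkj : k < j := by
        by_contra hle
        exact hnot ⟨j, by simpa using Nat.le_of_not_lt hle, rfl⟩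
      exact ⟨htail k j hjK hkj, hmA⟩
    · have h1 : ({n ∈ Lstar | s ∈ B n} \ (nk '' Set.Iic k)).Infinite :=
        hQinf.diff ((Set.finite_Iic k).image nk)
      refine h1.mono ?_
      rintro m ⟨⟨⟨j, hjK, rfl⟩, hmB⟩, hnot⟩
      have hkj : k < j := by
        by_contra hle
        exact hnot ⟨j, by simpa using Nat.le_of_not_lt hle, rfl⟩
      exact ⟨htail k j hjK hkj, hmB⟩
  -- now find a k in K with s on the right side
  cases b with
  | true =>
    obtain ⟨m, hm⟩ := hPinf.nonempty
    obtain ⟨⟨j, hjK, rfl⟩, hmA⟩ := hm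
    exact key j hjK (by simpa using hmA)
  | false =>
    obtain ⟨m, hm⟩ := hQinf.nonempty
    obtain ⟨⟨j, hjK, rfl⟩, hmB⟩ := hm
    exact key j hjK (by simpa using hmB)


variable (A B : ℕ → Set α)

/-- The cell determined by the first `k` indices of `e` and the pattern `σ`. -/
def cellF (e : ℕ → ℕ) (k : ℕ) (σ : ℕ → Bool) : Set α :=
  ⋂ j ∈ Finset.range k, (bif σ j then A (e j) else B (e j))

theorem cellF_zero (e : ℕ → ℕ) (σ : ℕ → Bool) : cellF A B e 0 σ = Set.univ := by
  simp [cellF]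

theorem cellF_succ (e : ℕ → ℕ) (k : ℕ) (σ : ℕ → Bool) :
    cellF A B e (k + 1) σ = cellF A B e k σ ∩ (bif σ k then A (e k) else B (e k)) := by
  rw [cellF, cellF, Finset.range_add_one, Finset.set_biInter_insert, Set.inter_comm]

theorem cellF_congr {e e' : ℕ → ℕ} {k : ℕ} (h : ∀ j < k, e j = e' j) (σ : ℕ → Bool) :
    cellF A B e k σ = cellF A B e' k σ := by
  unfold cellF
  refine Set.iInter₂_congr fun j hj => ?_
  rw [h j (Finset.mem_range.mp hj)]

theorem cellF_range_finite (e : ℕ → ℕ) (k : ℕ) :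
    (Set.range (cellF A B e k)).Finite := by
  induction k with
  | zero =>
    refine Set.Finite.subset (Set.finite_singleton Set.univ) ?_
    rintro _ ⟨σ, rfl⟩; simp [cellF_zero]
  | succ k ih =>
    have h2 : ({A (e k), B (e k)} : Set (Set α)).Finite := Set.toFinite _
    refine Set.Finite.subset (Set.Finite.image2 (· ∩ ·) ih h2) ?_
    rintro _ ⟨σ, rfl⟩
    rw [cellF_succ]
    refine Set.mem_image2_of_mem ⟨σ, rfl⟩ ?_
    cases σ k <;> simp

/-- A stage of the inductive construction of an independent subsequence. -/
structure DStage where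
  e : ℕ → ℕ
  k : ℕ
  M : Set ℕ
  hM : M.Infinite
  hlt : ∀ m ∈ M, ∀ j < k, e j < m
  hmono : ∀ i j, i < j → j < k → e i < e j
  hrich : ∀ σ : ℕ → Bool, Rich A B (cellF A B e k σ) M

theorem dstage_step (S : DStage A B) : ∃ S' : DStage A B, S'.k = S.k + 1 ∧
    (∀ j < S.k, S'.e j = S.e j) ∧ S'.M ⊆ S.M ∧ S'.e S.k ∈ S.M := by
  have hfin : Finite ↥(Set.range (cellF A B S.e S.k)) :=
    (cellF_range_finite A B S.e S.k).to_subtype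
  have hrich : ∀ D : ↥(Set.range (cellF A B S.e S.k)), Rich A B (D : Set α) S.M := by
    rintro ⟨_, σ, rfl⟩
    exact S.hrich σ
  obtain ⟨n, hnM, M', hM'M, hM'inf, hM'big, hM'rich⟩ :=
    rich_extend A B (fun D : ↥(Set.range (cellF A B S.e S.k)) => (D : Set α)) S.M S.hM hrich
  refine ⟨⟨Function.update S.e S.k n, S.k + 1, M', hM'inf, ?_, ?_, ?_⟩, rfl, ?_, hM'M, ?_⟩
  · intro m hm j hj
    rcases Nat.lt_or_ge j S.k with h | h
    · rw [Function.update_of_ne (Nat.ne_of_lt h)]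
      exact S.hlt m (hM'M hm) j h
    · have : j = S.k := le_antisymm (Nat.lt_succ_iff.mp hj) h
      subst this
      rw [Function.update_self]
      exact hM'big m hm
  · intro i j hij hj
    rcases Nat.lt_or_ge j S.k with h | h
    · rw [Function.update_of_ne (Nat.ne_of_lt (hij.trans h)), Function.update_of_ne (Nat.ne_of_lt h)]
      exact S.hmono i j hij h
    · have : j = S.k := le_antisymm (Nat.lt_succ_iff.mp hj) h
      subst this
      rw [Function.update_of_ne (Nat.ne_of_lt hij), Function.update_self]
      exact S.hlt n hnM i hij
  · intro σ
    have hagree : ∀ j < S.k, Function.update S.e S.k n j = S.e j := fun j hj =>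
      Function.update_of_ne (Nat.ne_of_lt hj) _ _
    rw [cellF_succ, cellF_congr A B hagree σ, Function.update_self]
    have := hM'rich ⟨cellF A B S.e S.k σ, σ, rfl⟩
    cases hσ : σ S.k
    · simpa using this.2
    · simpa using this.1
  · intro j hj
    exact Function.update_of_ne (Nat.ne_of_lt hj) _ _
  · show Function.update S.e S.k n S.k ∈ S.M
    rw [Function.update_self]
    exact hnM

/-- Rosenthal's combinatorial dichotomy: a sequence of pairs of sets either admits a
"convergent" subsequence or an "independent" subsequence. -/
theorem pairs_dichotomy :
    (∃ L : Set ℕ, L.Infinite ∧ ∀ s : α, {n ∈ L | s ∈ A n}.Finite ∨ {n ∈ L | s ∈ B n}.Finite) ∨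
    (∃ e : ℕ → ℕ, StrictMono e ∧ ∀ (k : ℕ) (σ : ℕ → Bool),
      (⋂ j ∈ Finset.range k, (bif σ j then A (e j) else B (e j))).Nonempty) := by
  by_cases hc : ∃ L : Set ℕ, L.Infinite ∧
      ∀ s : α, {n ∈ L | s ∈ A n}.Finite ∨ {n ∈ L | s ∈ B n}.Finite
  · exact Or.inl hc
  right
  push_neg at hc
  have hrich0 : ∀ σ : ℕ → Bool, Rich A B (cellF A B (fun _ => 0) 0 σ) Set.univ := by
    intro σ L _ hLinf
    obtain ⟨s, hs⟩ := hc L hLinf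
    exact ⟨s, by rw [cellF_zero]; trivial, hs.1, hs.2⟩
  -- build the sequence of stages
  have hstep := fun S => dstage_step A B S
  choose next hk hagree hMsub heS using hstep
  let S0 : DStage A B := ⟨fun _ => 0, 0, Set.univ, Set.infinite_univ,
    by intro m _ j hj; omega, by intro i j _ hj; omega, hrich0⟩
  let seq : ℕ → DStage A B := fun k => Nat.rec S0 (fun _ S => next S) k
  have hseq_succ : ∀ k, seq (k + 1) = next (seq k) := fun k => rfl
  have hseqk : ∀ k, (seq k).k = k := by
    intro k
    induction k with
    | zero => rfl
    | succ k ih => rw [hseq_succ, hk, ih]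
  -- agreement of e across stages
  have hagree' : ∀ m j, j < m → (seq (m + 1)).e j = (seq m).e j := by
    intro m j hj
    rw [hseq_succ]
    have := hagree (seq m) j (by rw [hseqk]; exact hj)
    exact this
  have hagree2 : ∀ m m', m ≤ m' → ∀ j < m, (seq m').e j = (seq m).e j := by
    intro m m' hmm'
    induction m' with
    | zero => intro j hj; omega
    | succ m' ih =>
      intro j hj
      rcases Nat.lt_or_ge m (m' + 1) with h | h
      · have h1 : (seq (m' + 1)).e j = (seq m').e j := hagree' m' j (by omega)
        rw [h1, ih (by omega) j hj]
      · have : m = m' + 1 := le_antisymm hmm' h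
        subst this; rfl
  refine ⟨fun j => (seq (j + 1)).e j, ?_, ?_⟩
  · intro i j hij
    show (seq (i + 1)).e i < (seq (j + 1)).e j
    have h1 : (seq (j + 1)).e i = (seq (i + 1)).e i :=
      hagree2 (i + 1) (j + 1) (by omega) i (by omega)
    rw [← h1]
    exact (seq (j + 1)).hmono i j hij (by rw [hseqk (j+1)]; omega)
  · intro k σ
    have h1 : cellF A B (fun j => (seq (j + 1)).e j) k σ = cellF A B (seq k).e k σ :=
      cellF_congr A B (fun j hj => (hagree2 (j + 1) k (by omega) j (by omega)).symm) σ
    have h2 : Rich A B (cellF A B (seq k).e k σ) (seq k).M := by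
      have := (seq k).hrich σ
      rwa [hseqk] at this
    obtain ⟨s, hs, _, _⟩ := h2 (seq k).M subset_rfl (seq k).hM
    have h3 : (⋂ j ∈ Finset.range k,
        (bif σ j then A ((fun j => (seq (j + 1)).e j) j) else B ((fun j => (seq (j + 1)).e j) j)))
        = cellF A B (seq k).e k σ := h1
    rw [show (⋂ j ∈ Finset.range k, (bif σ j then A ((seq (j + 1)).e j) else B ((seq (j + 1)).e j)))
        = cellF A B (fun j => (seq (j + 1)).e j) k σ from rfl, h1]
    exact ⟨s, hs⟩

end RosenthalAux

open RosenthalAux in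
/-- From an "independent" bounded sequence one constructs an isomorphic copy of `ℓ₁`. -/
theorem containsL1_of_independent [NormedAddCommGroup X] [NormedSpace ℝ X] [CompleteSpace X]
    (y : ℕ → X) (hy : ∀ j, ‖y j‖ ≤ 1) (r s : ℝ) (hrs : r < s)
    (hind : ∀ F G : Finset ℕ, Disjoint F G → ∃ f : X →L[ℝ] ℝ, ‖f‖ ≤ 1 ∧
      (∀ j ∈ F, f (y j) < r) ∧ (∀ j ∈ G, s < f (y j))) :
    ContainsL1 X := by
  have hone : (0:ℝ) < (1 : ENNReal).toReal := by norm_num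
  -- the basic finite-dimensional lower estimate
  have hfin : ∀ (a : ℕ → ℝ) (t : Finset ℕ),
      ((s - r) / 2) * ∑ j ∈ t, |a j| ≤ ‖∑ j ∈ t, a j • y j‖ := by
    intro a t
    classical
    set F := t.filter (fun j => a j < 0) with hF
    set G := t.filter (fun j => 0 ≤ a j) with hG
    have hdisj : Disjoint F G := by
      rw [Finset.disjoint_left]
      intro j hjF hjG
      rw [hF, Finset.mem_filter] at hjF
      rw [hG, Finset.mem_filter] at hjG
      linarith [hjF.2, hjG.2]
    obtain ⟨f1, hf1n, hf1F, hf1G⟩ := hind F G hdisj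
    obtain ⟨f2, hf2n, hf2F, hf2G⟩ := hind G F hdisj.symm
    set g := f1 - f2 with hg
    have hgn : ‖g‖ ≤ 2 := le_trans (norm_sub_le f1 f2) (by linarith)
    have key : ∀ j ∈ t, (s - r) * |a j| ≤ a j * g (y j) := by
      intro j hjt
      rcases lt_or_ge (a j) 0 with hneg | hpos
      · have hjF : j ∈ F := by rw [hF, Finset.mem_filter]; exact ⟨hjt, hneg⟩
        have h1 : f1 (y j) < r := hf1F j hjF
        have h2 : s < f2 (y j) := hf2G j hjF
        have hgv : g (y j) < r - s := by
          rw [hg]; simp only [ContinuousLinearMap.sub_apply]; linarith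
        rw [abs_of_neg hneg]
        nlinarith
      · have hjG : j ∈ G := by rw [hG, Finset.mem_filter]; exact ⟨hjt, hpos⟩
        have h1 : s < f1 (y j) := hf1G j hjG
        have h2 : f2 (y j) < r := hf2F j hjG
        have hgv : s - r < g (y j) := by
          rw [hg]; simp only [ContinuousLinearMap.sub_apply]; linarith
        rw [abs_of_nonneg hpos]
        nlinarith
    have h1 : (s - r) * ∑ j ∈ t, |a j| ≤ ∑ j ∈ t, a j * g (y j) := by
      rw [Finset.mul_sum]
      exact Finset.sum_le_sum key
    have h2 : ∑ j ∈ t, a j * g (y j) = g (∑ j ∈ t, a j • y j) := by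
      rw [map_sum]
      refine Finset.sum_congr rfl fun j _ => ?_
      rw [g.map_smul, smul_eq_mul]
    have h3 : g (∑ j ∈ t, a j • y j) ≤ 2 * ‖∑ j ∈ t, a j • y j‖ := by
      refine le_trans (le_abs_self _) ?_
      have h4 := g.le_opNorm (∑ j ∈ t, a j • y j)
      rw [Real.norm_eq_abs] at h4
      refine le_trans h4 ?_
      have h5 := norm_nonneg (∑ j ∈ t, a j • y j)
      nlinarith
    nlinarith
  -- summability facts
  have hsum : ∀ v : lpS 1, Summable fun j => ‖v j‖ := by
    intro v
    have := (lp.memℓp v).summable hone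
    simpa using this
  have hle : ∀ (v : lpS 1) (j : ℕ), ‖v j • y j‖ ≤ ‖v j‖ := by
    intro v j
    rw [norm_smul]
    exact le_trans (mul_le_mul_of_nonneg_left (hy j) (norm_nonneg _)) (le_of_eq (mul_one _))
  have hsumy : ∀ v : lpS 1, Summable fun j => v j • y j := by
    intro v
    exact Summable.of_norm ((hsum v).of_nonneg_of_le (fun j => norm_nonneg _) (hle v))
  have hnorm1 : ∀ v : lpS 1, ‖v‖ = ∑' j, ‖v j‖ := by
    intro v
    rw [lp.norm_eq_tsum_rpow hone v]
    simp
  -- the operator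
  let T0 : lpS 1 →ₗ[ℝ] X :=
    { toFun := fun v => ∑' j, v j • y j
      map_add' := by
        intro v w
        have h1 : ∀ j, ((v + w) : lpS 1) j • y j = v j • y j + w j • y j := by
          intro j
          rw [lp.coeFn_add]
          simp [add_smul]
        show (∑' j, ((v + w) : lpS 1) j • y j) = _
        rw [show (fun j => ((v + w) : lpS 1) j • y j) = fun j => v j • y j + w j • y j
          from funext h1]
        exact Summable.tsum_add (hsumy v) (hsumy w)
      map_smul' := by
        intro c v
        have h1 : ∀ j, ((c • v) : lpS 1) j • y j = c • (v j • y j) := by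
          intro j
          rw [lp.coeFn_smul]
          simp [smul_smul]
        show (∑' j, ((c • v) : lpS 1) j • y j) = _
        rw [show (fun j => ((c • v) : lpS 1) j • y j) = fun j => c • (v j • y j)
          from funext h1]
        simp only [RingHom.id_apply]
        exact Summable.tsum_const_smul c (hsumy v) }
  have hbound : ∀ v : lpS 1, ‖T0 v‖ ≤ 1 * ‖v‖ := by
    intro v
    have h1 : ‖∑' j, v j • y j‖ ≤ ∑' j, ‖v j • y j‖ :=
      norm_tsum_le_tsum_norm ((hsum v).of_nonneg_of_le (fun j => norm_nonneg _) (hle v))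
    have h2 : ∑' j, ‖v j • y j‖ ≤ ∑' j, ‖v j‖ :=
      Summable.tsum_le_tsum (hle v) ((hsum v).of_nonneg_of_le (fun j => norm_nonneg _) (hle v)) (hsum v)
    rw [one_mul, hnorm1 v]
    exact le_trans h1 h2
  let T : lpS 1 →L[ℝ] X := T0.mkContinuous 1 hbound
  refine ⟨T, (s - r) / 2, by linarith, ?_⟩
  intro v
  -- approximate by finite truncations
  have hTeq : ∀ w : lpS 1, T w = ∑' j, w j • y j := fun w => rfl
  have hsingle : HasSum (fun i => lp.single 1 i (v i)) v :=
    lp.hasSum_single (by norm_num) v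
  have htendsto : Tendsto (fun t : Finset ℕ => T (∑ i ∈ t, lp.single 1 i (v i)))
      atTop (𝓝 (T v)) := (T.continuous.tendsto v).comp hsingle
  have hTsingle : ∀ (i : ℕ) (c : ℝ), T (lp.single 1 i c) = c • y i := by
    intro i c
    have hz : ∀ j, j ≠ i → (lp.single 1 i c : lpS 1) j • y j = 0 := by
      intro j hji
      have h0 : (lp.single 1 i c : lpS 1) j = 0 := lp.single_apply_ne (E := fun _ : ℕ => ℝ) 1 i c hji
      rw [h0, zero_smul]
    have h1 : (lp.single 1 i c : lpS 1) i = c := lp.single_apply_self (E := fun _ : ℕ => ℝ) 1 i c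
    rw [hTeq, tsum_eq_single i hz, h1]
  have hTpart : ∀ t : Finset ℕ, T (∑ i ∈ t, lp.single 1 i (v i)) = ∑ i ∈ t, v i • y i := by
    intro t
    rw [map_sum]
    exact Finset.sum_congr rfl fun i _ => hTsingle i (v i)
  have hpart2 : Tendsto (fun t : Finset ℕ => ∑ i ∈ t, ‖v i‖) atTop (𝓝 ‖v‖) := by
    rw [hnorm1 v]
    exact (hsum v).hasSum
  have hfinal : Tendsto (fun t : Finset ℕ => (s - r) / 2 * ∑ i ∈ t, ‖v i‖)
      atTop (𝓝 ((s - r) / 2 * ‖v‖)) := hpart2.const_mul _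
  refine le_of_tendsto_of_tendsto' hfinal htendsto.norm fun t => ?_
  rw [hTpart t]
  have := hfin (fun j => v j) t
  simpa [Real.norm_eq_abs] using this


open RosenthalAux in
/-- Rosenthal's ℓ₁ theorem: in a Banach space without a copy of `ℓ₁`, every sequence in the
unit ball has a weakly Cauchy subsequence. -/
theorem rosenthal_weakly_cauchy [NormedAddCommGroup X] [NormedSpace ℝ X] [CompleteSpace X]
    (hX : ¬ ContainsL1 X) (x : ℕ → X) (hx : ∀ n, ‖x n‖ ≤ 1) :
    ∃ φ : ℕ → ℕ, StrictMono φ ∧ WeaklyCauchy (x ∘ φ) := by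
  classical
  -- Stage lemma: given a subsequence and a rational pair, refine it.
  have stage : ∀ φ : ℕ → ℕ, StrictMono φ → ∀ r s : ℚ, (r : ℝ) < (s : ℝ) →
      ∃ ψ : ℕ → ℕ, StrictMono ψ ∧ ∀ f : X →L[ℝ] ℝ, ‖f‖ ≤ 1 →
        {i | f (x (φ (ψ i))) < (r : ℝ)}.Finite ∨ {i | (s : ℝ) < f (x (φ (ψ i)))}.Finite := by
    intro φ hφ r s hrs
    set A : ℕ → Set (X →L[ℝ] ℝ) := fun n => {f | ‖f‖ ≤ 1 ∧ f (x (φ n)) < (r : ℝ)} with hA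
    set B : ℕ → Set (X →L[ℝ] ℝ) := fun n => {f | ‖f‖ ≤ 1 ∧ (s : ℝ) < f (x (φ n))} with hB
    rcases pairs_dichotomy A B with ⟨L, hLinf, hconv⟩ | ⟨e, he, hind⟩
    · -- convergent branch: enumerate L
      have hLinf' : (setOf (· ∈ L)).Infinite := hLinf
      set ψ : ℕ → ℕ := Nat.nth (· ∈ L) with hψ
      have hψmono : StrictMono ψ := Nat.nth_strictMono hLinf'
      have hψmem : ∀ i, ψ i ∈ L := fun i => Nat.nth_mem_of_infinite hLinf' i
      refine ⟨ψ, hψmono, fun f hf => ?_⟩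
      rcases hconv f with h | h
      · left
        have hsub : {i | f (x (φ (ψ i))) < (r : ℝ)} ⊆ ψ ⁻¹' {n ∈ L | f ∈ A n} := by
          intro i hi
          exact ⟨hψmem i, hf, hi⟩
        exact (h.preimage (Set.injOn_of_injective hψmono.injective)).subset hsub
      · right
        have hsub : {i | (s : ℝ) < f (x (φ (ψ i)))} ⊆ ψ ⁻¹' {n ∈ L | f ∈ B n} := by
          intro i hi
          exact ⟨hψmem i, hf, hi⟩
        exact (h.preimage (Set.injOn_of_injective hψmono.injective)).subset hsub
    · -- independent branch: build a copy of ℓ₁, contradiction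
      exfalso
      apply hX
      refine containsL1_of_independent (fun j => x (φ (e j))) (fun j => hx _) r s hrs ?_
      intro F G hFG
      set k := (F ∪ G).sup id + 1 with hk
      set σ : ℕ → Bool := fun j => decide (j ∈ F) with hσ
      obtain ⟨f, hf⟩ := hind k σ
      have hmem : ∀ j < k, f ∈ (bif σ j then A (e j) else B (e j)) := by
        intro j hj
        have := Set.mem_iInter₂.mp hf j (Finset.mem_range.mpr hj)
        exact this
      have hfn : ‖f‖ ≤ 1 := by
        have h0 := hmem 0 (by omega)
        cases h : σ 0 <;> rw [h] at h0 <;> exact h0.1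
      refine ⟨f, hfn, ?_, ?_⟩
      · intro j hjF
        have hjk : j < k := by
          have : j ≤ (F ∪ G).sup id := Finset.le_sup (f := id) (Finset.mem_union_left G hjF)
          omega
        have := hmem j hjk
        rw [show σ j = true from decide_eq_true hjF] at this
        exact this.2
      · intro j hjG
        have hjk : j < k := by
          have : j ≤ (F ∪ G).sup id := Finset.le_sup (f := id) (Finset.mem_union_right F hjG)
          omega
        have hjF : j ∉ F := fun hjF => (Finset.disjoint_left.mp hFG) hjF hjG
        have := hmem j hjk
        rw [show σ j = false from decide_eq_false hjF] at this
        exact this.2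
  -- enumeration of rational pairs
  set g : ℕ → ℚ × ℚ := fun n => (Denumerable.eqv (ℚ × ℚ)).symm n with hg
  have hgsurj : Function.Surjective g := (Denumerable.eqv (ℚ × ℚ)).symm.surjective
  -- the recursive sequence of subsequences
  have step2 : ∀ (φ : {f : ℕ → ℕ // StrictMono f}) (k : ℕ),
      ∃ ψ : {f : ℕ → ℕ // StrictMono f}, ((g k).1 : ℝ) < ((g k).2 : ℝ) →
        ∀ f : X →L[ℝ] ℝ, ‖f‖ ≤ 1 →
          {i | f (x (φ.1 (ψ.1 i))) < ((g k).1 : ℝ)}.Finite ∨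
          {i | ((g k).2 : ℝ) < f (x (φ.1 (ψ.1 i)))}.Finite := by
    intro φ k
    by_cases hrs : ((g k).1 : ℝ) < ((g k).2 : ℝ)
    · obtain ⟨ψ, hψ, hconv⟩ := stage φ.1 φ.2 (g k).1 (g k).2 hrs
      exact ⟨⟨ψ, hψ⟩, fun _ => hconv⟩
    · exact ⟨⟨id, strictMono_id⟩, fun h => absurd h hrs⟩
  choose nextψ hnext using step2
  set Φ : ℕ → {f : ℕ → ℕ // StrictMono f} := fun k =>
    Nat.rec ⟨id, strictMono_id⟩
      (fun k φ => ⟨φ.1 ∘ (nextψ φ k).1, φ.2.comp (nextψ φ k).2⟩) k with hΦ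
  have hΦsucc : ∀ k, (Φ (k + 1)).1 = (Φ k).1 ∘ (nextψ (Φ k) k).1 := fun k => rfl
  -- the diagonal sequence
  set d : ℕ → ℕ := fun i => (Φ (i + 1)).1 i with hd
  have hdmono : StrictMono d := by
    apply strictMono_nat_of_lt_succ
    intro i
    show (Φ (i + 1)).1 i < (Φ (i + 2)).1 (i + 1)
    have h1 : (Φ (i + 2)).1 (i + 1) = (Φ (i + 1)).1 ((nextψ (Φ (i + 1)) (i + 1)).1 (i + 1)) :=
      congrFun (hΦsucc (i + 1)) (i + 1)
    rw [h1]
    have h2 : i + 1 ≤ (nextψ (Φ (i + 1)) (i + 1)).1 (i + 1) :=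
      (nextψ (Φ (i + 1)) (i + 1)).2.le_apply
    calc (Φ (i + 1)).1 i < (Φ (i + 1)).1 (i + 1) := (Φ (i + 1)).2 (by omega)
      _ ≤ (Φ (i + 1)).1 ((nextψ (Φ (i + 1)) (i + 1)).1 (i + 1)) := (Φ (i + 1)).2.monotone h2
  -- every `Φ m` for `m ≥ k` lands in the range of `Φ k`
  have hrange : ∀ k m, k ≤ m → ∀ j, ∃ j', (Φ k).1 j' = (Φ m).1 j := by
    intro k m hkm
    induction m with
    | zero =>
      have : k = 0 := by omega
      subst this
      exact fun j => ⟨j, rfl⟩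
    | succ m ih =>
      intro j
      rcases Nat.lt_or_ge k (m + 1) with h | h
      · obtain ⟨j', hj'⟩ := ih (by omega) ((nextψ (Φ m) m).1 j)
        exact ⟨j', by rw [hj', hΦsucc m]; rfl⟩
      · have : k = m + 1 := by omega
        subst this
        exact ⟨j, rfl⟩
  have hdrange : ∀ k i, k ≤ i → ∃ j', (Φ k).1 j' = d i := by
    intro k i hki
    exact hrange k (i + 1) (by omega) i
  -- conclusion
  refine ⟨d, hdmono, ?_⟩
  intro f
  rcases eq_or_ne f 0 with rfl | hf0
  · simpa using cauchySeq_const (0 : ℝ)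
  set h : X →L[ℝ] ℝ := ‖f‖⁻¹ • f with hh
  have hfpos : (0 : ℝ) < ‖f‖ := norm_pos_iff.mpr hf0
  have hhn : ‖h‖ ≤ 1 := by
    have h1 : ‖h‖ = ‖(‖f‖⁻¹ : ℝ)‖ * ‖f‖ := norm_smul (‖f‖⁻¹ : ℝ) f
    rw [h1, norm_inv, norm_norm, inv_mul_cancel₀ (ne_of_gt hfpos)]
  have hmain : CauchySeq fun i => h (x (d i)) := by
    by_contra hnc
    rw [Metric.cauchySeq_iff] at hnc
    push_neg at hnc
    obtain ⟨ε, hε, hεdiv⟩ := hnc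
    choose m' hm' n' hn' hdist using hεdiv
    set u : ℕ → ℝ := fun i => h (x (d i)) with hu
    have hubb : ∀ i, u i ∈ Set.Icc (-1 : ℝ) 1 := by
      intro i
      have h1 : |u i| ≤ 1 := by
        rw [hu]
        calc |h (x (d i))| = ‖h (x (d i))‖ := (Real.norm_eq_abs _).symm
          _ ≤ ‖h‖ * ‖x (d i)‖ := h.le_opNorm _
          _ ≤ 1 * 1 := mul_le_mul hhn (hx _) (norm_nonneg _) zero_le_one
          _ = 1 := one_mul 1
      exact Set.mem_Icc.mpr (abs_le.mp h1)
    obtain ⟨a, _, α1, hα1, hta⟩ := isCompact_Icc.tendsto_subseq (x := fun N => u (m' N)) (fun N => hubb _)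
    obtain ⟨b, _, α2, hα2, htb⟩ := isCompact_Icc.tendsto_subseq
      (x := fun N => u (n' (α1 N))) (fun N => hubb _)
    have hta2 : Tendsto (fun N => u (m' (α1 (α2 N)))) atTop (𝓝 a) :=
      hta.comp hα2.tendsto_atTop
    have hab : ε ≤ |a - b| := by
      have h1 : Tendsto (fun N => |u (m' (α1 (α2 N))) - u (n' (α1 (α2 N)))|) atTop (𝓝 |a - b|) :=
        (hta2.sub htb).abs
      refine ge_of_tendsto h1 ?_
      filter_upwards with N
      have h2 := hdist (α1 (α2 N))
      rw [Real.dist_eq] at h2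
      exact h2
    have habne : a ≠ b := by
      intro hab'
      rw [hab', sub_self, abs_zero] at hab
      linarith
    -- two rationals between the two cluster points
    obtain ⟨r, hr1, hr2⟩ := exists_rat_btwn (show min a b < max a b by
      rcases habne.lt_or_gt with h | h
      · rw [min_eq_left h.le, max_eq_right h.le]; exact h
      · rw [min_eq_right h.le, max_eq_left h.le]; exact h)
    obtain ⟨sq, hs1, hs2⟩ := exists_rat_btwn hr2
    -- generic arguments producing infinitely many small/large indices
    have keylt : ∀ (w : ℕ → ℕ) (c : ℝ), (∀ N, N ≤ w N) →
        Tendsto (fun N => u (w N)) atTop (𝓝 c) → ∀ t : ℝ, c < t → {i | u i < t}.Infinite := by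
      intro w c hw hcv t hct
      obtain ⟨N0, hN0⟩ := (hcv.eventually_lt_const hct).exists_forall_of_atTop
      intro hfin
      obtain ⟨b, hb⟩ := hfin.bddAbove
      have h1 : u (w (max N0 (b + 1))) < t := hN0 _ (le_max_left _ _)
      have h2 := hb h1
      have h3 := hw (max N0 (b + 1))
      have h4 : b + 1 ≤ max N0 (b + 1) := le_max_right _ _
      omega
    have keygt : ∀ (w : ℕ → ℕ) (c : ℝ), (∀ N, N ≤ w N) →
        Tendsto (fun N => u (w N)) atTop (𝓝 c) → ∀ t : ℝ, t < c → {i | t < u i}.Infinite := by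
      intro w c hw hcv t hct
      obtain ⟨N0, hN0⟩ := (hcv.eventually_const_lt hct).exists_forall_of_atTop
      intro hfin
      obtain ⟨b, hb⟩ := hfin.bddAbove
      have h1 : t < u (w (max N0 (b + 1))) := hN0 _ (le_max_left _ _)
      have h2 := hb h1
      have h3 := hw (max N0 (b + 1))
      have h4 : b + 1 ≤ max N0 (b + 1) := le_max_right _ _
      omega
    set w1 : ℕ → ℕ := fun N => m' (α1 (α2 N)) with hw1def
    set w2 : ℕ → ℕ := fun N => n' (α1 (α2 N)) with hw2def
    have hw1 : ∀ N, N ≤ w1 N := by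
      intro N
      show N ≤ m' (α1 (α2 N))
      have h5 : N ≤ α2 N := hα2.le_apply
      have h6 : α2 N ≤ α1 (α2 N) := hα1.le_apply
      have h7 := hm' (α1 (α2 N))
      omega
    have hw2 : ∀ N, N ≤ w2 N := by
      intro N
      show N ≤ n' (α1 (α2 N))
      have h5 : N ≤ α2 N := hα2.le_apply
      have h6 : α2 N ≤ α1 (α2 N) := hα1.le_apply
      have h7 := hn' (α1 (α2 N))
      omega
    have hlow : {i | u i < ((r : ℝ))}.Infinite := by
      rcases le_total a b with hab' | hab'
      · rw [min_eq_left hab'] at hr1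
        exact keylt w1 a hw1 hta2 r hr1
      · rw [min_eq_right hab'] at hr1
        exact keylt w2 b hw2 htb r hr1
    have hhigh : {i | ((sq : ℝ)) < u i}.Infinite := by
      rcases le_total a b with hab' | hab'
      · rw [max_eq_right hab'] at hs2
        exact keygt w2 b hw2 htb sq hs2
      · rw [max_eq_left hab'] at hs2
        exact keygt w1 a hw1 hta2 sq hs2
    -- feed this to the stage invariant
    obtain ⟨k, hkg⟩ := hgsurj (r, sq)
    have hrs' : ((g k).1 : ℝ) < ((g k).2 : ℝ) := by
      rw [hkg]
      exact_mod_cast hs1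
    have hinv := hnext (Φ k) k hrs' h hhn
    rw [hkg] at hinv
    have htrans : ∀ (t : ℝ), ({i | u i < t}.Infinite →
        ¬ {i | h (x ((Φ k).1 ((nextψ (Φ k) k).1 i))) < t}.Finite) := by
      intro t hinf hfin
      have himg : d '' ({i | u i < t} ∩ Set.Ici (k + 1)) ⊆
          ((Φ k).1 ∘ (nextψ (Φ k) k).1) '' {i | h (x ((Φ k).1 ((nextψ (Φ k) k).1 i))) < t} := by
        rintro _ ⟨i, ⟨hiu, hik⟩, rfl⟩
        obtain ⟨j, hj⟩ := hdrange (k + 1) i hik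
        rw [hΦsucc k] at hj
        refine ⟨j, ?_, hj⟩
        show h (x ((Φ k).1 ((nextψ (Φ k) k).1 j))) < t
        have hj' : (Φ k).1 ((nextψ (Φ k) k).1 j) = d i := hj
        rw [hj']
        exact hiu
      have hfin2 : (d '' ({i | u i < t} ∩ Set.Ici (k + 1))).Finite :=
        (hfin.image _).subset himg
      have hinf2 : (d '' ({i | u i < t} ∩ Set.Ici (k + 1))).Infinite :=
        ((hinf.diff (Set.finite_Iio (k + 1))).mono (by
          intro i hi
          exact ⟨hi.1, by simpa using hi.2⟩)).image
          (Set.injOn_of_injective hdmono.injective)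
      exact hinf2 hfin2
    have htrans2 : ∀ (t : ℝ), ({i | t < u i}.Infinite →
        ¬ {i | t < h (x ((Φ k).1 ((nextψ (Φ k) k).1 i)))}.Finite) := by
      intro t hinf hfin
      have himg : d '' ({i | t < u i} ∩ Set.Ici (k + 1)) ⊆
          ((Φ k).1 ∘ (nextψ (Φ k) k).1) '' {i | t < h (x ((Φ k).1 ((nextψ (Φ k) k).1 i)))} := by
        rintro _ ⟨i, ⟨hiu, hik⟩, rfl⟩
        obtain ⟨j, hj⟩ := hdrange (k + 1) i hik
        rw [hΦsucc k] at hj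
        refine ⟨j, ?_, hj⟩
        show t < h (x ((Φ k).1 ((nextψ (Φ k) k).1 j)))
        have hj' : (Φ k).1 ((nextψ (Φ k) k).1 j) = d i := hj
        rw [hj']
        exact hiu
      have hfin2 : (d '' ({i | t < u i} ∩ Set.Ici (k + 1))).Finite :=
        (hfin.image _).subset himg
      have hinf2 : (d '' ({i | t < u i} ∩ Set.Ici (k + 1))).Infinite :=
        ((hinf.diff (Set.finite_Iio (k + 1))).mono (by
          intro i hi
          exact ⟨hi.1, by simpa using hi.2⟩)).image
          (Set.injOn_of_injective hdmono.injective)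
      exact hinf2 hfin2
    rcases hinv with hfin | hfin
    · exact htrans (r : ℝ) hlow hfin
    · exact htrans2 (sq : ℝ) hhigh hfin
  -- scale back from `h` to `f`
  obtain ⟨l, hl⟩ := cauchySeq_tendsto_of_complete hmain
  have heq : ∀ n, f ((x ∘ d) n) = ‖f‖ * h (x (d n)) := by
    intro n
    show f (x (d n)) = ‖f‖ * h (x (d n))
    rw [hh]
    simp only [ContinuousLinearMap.smul_apply, smul_eq_mul]
    rw [← mul_assoc, mul_inv_cancel₀ (ne_of_gt hfpos), one_mul]
  have : Tendsto (fun n => f ((x ∘ d) n)) atTop (𝓝 (‖f‖ * l)) := by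
    rw [show (fun n => f ((x ∘ d) n)) = fun n => ‖f‖ * h (x (d n)) from funext heq]
    exact hl.const_mul _
  exact this.cauchySeq


section WeakFacts

theorem topDualPairing_flip_injective [NormedAddCommGroup X] [NormedSpace ℝ X] :
    Function.Injective ((topDualPairing ℝ X).flip) :=
  separatingDual_iff_injective.mp inferInstance

theorem relWeaklyCompact_insert_range [NormedAddCommGroup X] [NormedSpace ℝ X]
    (z : ℕ → X) (hz : WeaklyNull z) :
    RelWeaklyCompact (insert (0 : X) (Set.range z)) := by
  have hinj := topDualPairing_flip_injective (X := X)
  haveI ht2 : T2Space (WeakSpace ℝ X) := (WeakBilin.isEmbedding hinj).t2Space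
  have htend : Tendsto (fun n => (toWeakSpaceCLM ℝ X) (z n)) atTop
      (𝓝 ((toWeakSpaceCLM ℝ X) 0)) := by
    refine (WeakBilin.tendsto_iff_forall_eval_tendsto _ hinj).mpr ?_
    intro y
    have h1 : ∀ n, (topDualPairing ℝ X).flip ((toWeakSpaceCLM ℝ X) (z n)) y = y (z n) := fun n =>
      rfl
    have h2 : (topDualPairing ℝ X).flip ((toWeakSpaceCLM ℝ X) 0) y = 0 := by
      show y 0 = 0
      exact map_zero y
    rw [funext h1, h2]
    exact hz y
  have hK : IsCompact (insert ((toWeakSpaceCLM ℝ X) 0)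
      (Set.range fun n => (toWeakSpaceCLM ℝ X) (z n))) := htend.isCompact_insert_range
  unfold RelWeaklyCompact
  have himg : (toWeakSpaceCLM ℝ X) '' insert (0 : X) (Set.range z) =
      insert ((toWeakSpaceCLM ℝ X) 0) (Set.range fun n => (toWeakSpaceCLM ℝ X) (z n)) := by
    rw [Set.image_insert_eq]
    congr 1
    rw [← Set.range_comp]
    rfl
  rw [himg, hK.isClosed.closure_eq]
  exact hK

/-- The `k`-th coordinate functional on `ℓ_p`. -/
def lpCoord (p : ENNReal) [Fact (1 ≤ p)] (k : ℕ) : lpS p →L[ℝ] ℝ :=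
  LinearMap.mkContinuous
    { toFun := fun v => v k
      map_add' := fun v w => by
        show (v + w : lpS p) k = _
        rw [lp.coeFn_add]
        rfl
      map_smul' := fun c v => by
        show (c • v : lpS p) k = _
        rw [lp.coeFn_smul]
        rfl }
    1 (fun v => by
      rw [one_mul]
      have hp0 : p ≠ 0 := by
        have h1 : (1 : ENNReal) ≤ p := Fact.out
        intro h
        rw [h] at h1
        simp at h1
      exact lp.norm_apply_le_norm hp0 v k)

theorem lpCoord_apply (p : ENNReal) [Fact (1 ≤ p)] (k : ℕ) (v : lpS p) :
    lpCoord p k v = v k := rfl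

set_option synthInstance.maxHeartbeats 1000000 in
/-- In a coarse `p`-DP* space, weakly null sequences are sent to norm-null sequences by
every operator into `ℓ_p`. -/
theorem hdp_weaklyNull (p : ENNReal) [Fact (1 ≤ p)] [NormedAddCommGroup X] [NormedSpace ℝ X]
    (hdp : CoarsePDPstar p X) (z : ℕ → X) (hz : WeaklyNull z) (T : X →L[ℝ] lpS p) :
    Tendsto (fun n => ‖T (z n)‖) atTop (𝓝 0) := by
  have hA : RelWeaklyCompact (insert (0 : X) (Set.range z)) :=
    relWeaklyCompact_insert_range z hz
  have hc := hdp _ hA T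
  refine tendsto_of_subseq_tendsto ?_
  intro ns hns
  have hmem : ∀ i, T (z (ns i)) ∈ closure (T '' insert (0 : X) (Set.range z)) := fun i =>
    subset_closure ⟨z (ns i), Or.inr ⟨ns i, rfl⟩, rfl⟩
  obtain ⟨w, _, ψ, hψ, hconv⟩ := hc.tendsto_subseq hmem
  have hw0 : w = 0 := by
    refine lp.ext (funext fun k => ?_)
    have h1 : Tendsto (fun i => lpCoord p k (T (z (ns (ψ i))))) atTop (𝓝 (lpCoord p k w)) :=
      ((lpCoord p k).continuous.tendsto w).comp hconv
    have h2 : Tendsto (fun i => ((lpCoord p k).comp T) (z (ns (ψ i)))) atTop (𝓝 0) :=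
      (hz ((lpCoord p k).comp T)).comp (hns.comp hψ.tendsto_atTop)
    have h3 : (fun i => ((lpCoord p k).comp T) (z (ns (ψ i)))) =
        fun i => lpCoord p k (T (z (ns (ψ i)))) := rfl
    rw [h3] at h2
    have h4 : lpCoord p k w = 0 := tendsto_nhds_unique h1 h2
    rw [lpCoord_apply] at h4
    rw [h4]
    rfl
  refine ⟨ψ, ?_⟩
  have h5 : Tendsto (fun i => ‖T (z (ns (ψ i)))‖) atTop (𝓝 ‖w‖) := hconv.norm
  rw [hw0, norm_zero] at h5
  exact h5

end WeakFacts

theorem stmt14 (p : ENNReal) [Fact (1 ≤ p)] (hp : p ≠ ⊤)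
    [NormedAddCommGroup X] [NormedSpace ℝ X] [CompleteSpace X]
    (hX : ¬ ContainsL1 X) (hdp : CoarsePDPstar p X) :
    CoarsePLimited p (closedBall (0 : X) 1) := by
  intro T
  set s := T '' closedBall (0 : X) 1 with hsdef
  have hseq : IsSeqCompact (closure s) := by
    intro v hv
    have happrox : ∀ n : ℕ, ∃ u ∈ s, dist (v n) u < 1 / (n + 1) := by
      intro n
      exact Metric.mem_closure_iff.mp (hv n) _ (by positivity)
    choose u hus hud using happrox
    have hexists : ∀ n, ∃ xx, ‖xx‖ ≤ 1 ∧ T xx = u n := by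
      intro n
      obtain ⟨xx, hxx, hTxx⟩ := hus n
      exact ⟨xx, by simpa [mem_closedBall, dist_zero_right] using hxx, hTxx⟩
    choose xs hxs hTxs using hexists
    obtain ⟨φ, hφ, hwc⟩ := rosenthal_weakly_cauchy hX xs hxs
    have hcauchy : CauchySeq (fun i => T (xs (φ i))) := by
      by_contra hnc
      rw [Metric.cauchySeq_iff] at hnc
      push_neg at hnc
      obtain ⟨ε, hε, hdiv⟩ := hnc
      choose m' hm' n' hn' hdist using hdiv
      set z : ℕ → X := fun i => xs (φ (m' i)) - xs (φ (n' i)) with hz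
      have hznull : WeaklyNull z := by
        intro f
        have hcf : CauchySeq fun i => f (xs (φ i)) := hwc f
        obtain ⟨l, hl⟩ := cauchySeq_tendsto_of_complete hcf
        have h1 : Tendsto (fun i => f (xs (φ (m' i)))) atTop (𝓝 l) :=
          hl.comp (tendsto_atTop_mono hm' tendsto_id)
        have h2 : Tendsto (fun i => f (xs (φ (n' i)))) atTop (𝓝 l) :=
          hl.comp (tendsto_atTop_mono hn' tendsto_id)
        have h3 := h1.sub h2
        rw [sub_self] at h3
        have h4 : (fun i => f (xs (φ (m' i))) - f (xs (φ (n' i)))) = fun i => f (z i) := by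
          funext i
          rw [hz]
          simp [map_sub]
        rwa [h4] at h3
      have hTz := hdp_weaklyNull p hdp z hznull T
      have hcontra : ∀ᶠ i in atTop, ‖T (z i)‖ < ε := hTz.eventually (gt_mem_nhds hε)
      obtain ⟨i, hi⟩ := hcontra.exists
      have hge : ε ≤ ‖T (z i)‖ := by
        have h5 := hdist i
        rw [dist_eq_norm] at h5
        have h6 : T (xs (φ (m' i))) - T (xs (φ (n' i))) = T (z i) := by
          rw [hz, map_sub]
        rwa [h6] at h5
      linarith
    obtain ⟨w, hw⟩ := cauchySeq_tendsto_of_complete hcauchy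
    have hmem2 : ∀ i, T (xs (φ i)) ∈ s := by
      intro i
      refine ⟨xs (φ i), ?_, rfl⟩
      rw [mem_closedBall, dist_zero_right]
      exact hxs _
    have hwmem : w ∈ closure s := mem_closure_of_tendsto hw (Eventually.of_forall hmem2)
    refine ⟨w, hwmem, φ, hφ, ?_⟩
    -- squeeze
    rw [tendsto_iff_dist_tendsto_zero]
    have hbound : ∀ i, dist (v (φ i)) w ≤ 1 / (φ i + 1) + dist (T (xs (φ i))) w := by
      intro i
      calc dist (v (φ i)) w ≤ dist (v (φ i)) (u (φ i)) + dist (u (φ i)) w := dist_triangle _ _ _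
        _ ≤ 1 / (φ i + 1) + dist (T (xs (φ i))) w := by
            refine add_le_add (le_of_lt (hud (φ i))) (le_of_eq ?_)
            rw [hTxs]
    have hto0 : Tendsto (fun i => 1 / ((φ i : ℝ) + 1) + dist (T (xs (φ i))) w) atTop (𝓝 0) := by
      have ha : Tendsto (fun i => 1 / ((φ i : ℝ) + 1)) atTop (𝓝 0) := by
        have h7 := (tendsto_one_div_add_atTop_nhds_zero_nat (𝕜 := ℝ)).comp hφ.tendsto_atTop
        simpa [Function.comp_def] using h7
      have hb : Tendsto (fun i => dist (T (xs (φ i))) w) atTop (𝓝 0) :=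
        tendsto_iff_dist_tendsto_zero.mp hw
      simpa using ha.add hb
    refine squeeze_zero (fun i => dist_nonneg) ?_ hto0
    intro i
    exact hbound i
  exact hseq.isCompact
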